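/- Let w be a rich square-free word that is a palindrome, so w = z·b·reverse(z) for some letter b and word z. Then the middle letter b does not occur in z (i.e., b is unioccurrent in w). -/

import Mathlib

/-- A word is a palindrome if it equals its reversal. -/
def Palindromic {α : Type*} (w : List α) : Prop := w.reverse = w

/-- A finite word is rich if it has exactly |w|+1 distinct palindromic factors
(including the empty word). -/
def Rich {α : Type*} (w : List α) : Prop :=
  {p : List α | p <:+: w ∧ Palindromic p}.ncard = w.length + 1

/-- A word is square-free if it has no factor of the form `u ++ u` with `u` nonempty. -/
def SqFree {α : Type*} (w : List α) : Prop :=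
  ∀ u : List α, u ≠ [] → ¬ (u ++ u) <:+: w

namespace MLUaux

variable {α : Type*}

/-- The set of palindromic factors. -/
def Pals (w : List α) : Set (List α) := {p | p <:+: w ∧ Palindromic p}

lemma pals_finite (w : List α) : (Pals w).Finite := by
  classical
  refine Set.Finite.subset (w.sublists.toFinset : Finset (List α)).finite_toSet ?_
  rintro p ⟨hp, -⟩
  simp only [List.coe_toFinset, Set.mem_setOf_eq, List.mem_sublists]
  exact hp.sublist

/-- An infix of `v ++ [a]` is an infix of `v` or a suffix of `v ++ [a]`. -/
lemma infix_concat {p v : List α} {a : α} (h : p <:+: v ++ [a]) :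
    p <:+: v ∨ p <:+ v ++ [a] := by
  obtain ⟨q, r, hqr⟩ := h
  rcases List.eq_nil_or_concat' r with rfl | ⟨r', c, rfl⟩
  · right
    exact ⟨q, by simpa using hqr⟩
  · left
    have h2 : (q ++ (p ++ r')) ++ [c] = v ++ [a] := by
      simpa [List.append_assoc] using hqr
    have h3 := (List.append_inj' h2 rfl).1
    exact ⟨q, r', by simpa [List.append_assoc] using h3⟩

/-- At most one new palindrome per added letter. -/
lemma new_subsingleton (v : List α) (a : α) :
    {s : List α | s <:+ v ++ [a] ∧ Palindromic s ∧ ¬ s <:+: v}.Subsingleton := by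
  have key : ∀ s₁ s₂ : List α, s₁ <:+ v ++ [a] → s₂ <:+ v ++ [a] → Palindromic s₂ →
      s₁.length < s₂.length → Palindromic s₁ → s₁ <:+: v := by
    intro s₁ s₂ h₁ h₂ hp₂ hlt hp₁
    have hsuf : s₁ <:+ s₂ := List.suffix_of_suffix_length_le h₁ h₂ hlt.le
    -- since s₂ is a palindrome, s₁ is also a prefix of s₂
    have hpre : s₁ <+: s₂ := by
      have := List.reverse_prefix.mpr hsuf
      rwa [hp₁, hp₂] at this
    obtain ⟨t, ht⟩ := hpre
    have htne : t ≠ [] := by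
      rintro rfl
      have := congrArg List.length ht
      simp at this
      omega
    obtain ⟨t', c, rfl⟩ := (List.eq_nil_or_concat' t).resolve_left htne
    obtain ⟨q, hq⟩ := h₂
    rw [← ht] at hq
    have h2 : (q ++ (s₁ ++ t')) ++ [c] = v ++ [a] := by
      simpa [List.append_assoc] using hq
    have h3 := (List.append_inj' h2 rfl).1
    exact ⟨q, t', by simpa [List.append_assoc] using h3⟩
  intro s₁ h₁ s₂ h₂
  by_contra hne
  rcases Nat.lt_trichotomy s₁.length s₂.length with h | h | h
  · exact h₁.2.2 (key s₁ s₂ h₁.1 h₂.1 h₂.2.1 h h₁.2.1)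
  · exact hne ((List.suffix_of_suffix_length_le h₁.1 h₂.1 h.le).eq_of_length h)
  · exact h₂.2.2 (key s₂ s₁ h₂.1 h₁.1 h₁.2.1 h h₂.2.1)

lemma pals_step (v : List α) (a : α) :
    (Pals (v ++ [a])).ncard ≤ (Pals v).ncard + 1 := by
  have hsub : Pals (v ++ [a]) ⊆ Pals v ∪
      {s : List α | s <:+ v ++ [a] ∧ Palindromic s ∧ ¬ s <:+: v} := by
    rintro p ⟨hinf, hpal⟩
    by_cases hv : p <:+: v
    · exact Or.inl ⟨hv, hpal⟩
    · rcases infix_concat hinf with h | h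
      · exact absurd h hv
      · exact Or.inr ⟨h, hpal, hv⟩
  have hSfin : {s : List α | s <:+ v ++ [a] ∧ Palindromic s ∧ ¬ s <:+: v}.Finite := by
    refine Set.Finite.subset (pals_finite (v ++ [a])) ?_
    rintro s ⟨h1, h2, -⟩
    exact ⟨h1.isInfix, h2⟩
  have hSn : ({s : List α | s <:+ v ++ [a] ∧ Palindromic s ∧ ¬ s <:+: v}).ncard ≤ 1 := by
    rcases (new_subsingleton v a).eq_empty_or_singleton with h | ⟨x, h⟩ <;> rw [h] <;> simp
  calc (Pals (v ++ [a])).ncard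
      ≤ (Pals v ∪ {s : List α | s <:+ v ++ [a] ∧ Palindromic s ∧ ¬ s <:+: v}).ncard :=
        Set.ncard_le_ncard hsub (Set.Finite.union (pals_finite v) hSfin)
    _ ≤ (Pals v).ncard + ({s : List α | s <:+ v ++ [a] ∧ Palindromic s ∧ ¬ s <:+: v}).ncard :=
        Set.ncard_union_le _ _
    _ ≤ (Pals v).ncard + 1 := by omega

lemma pals_bound (w : List α) : (Pals w).ncard ≤ w.length + 1 := by
  induction w using List.reverseRecOn with
  | nil =>
    have h : Pals ([] : List α) = {[]} := by
      ext p
      constructor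
      · rintro ⟨hp, -⟩
        simpa using hp
      · rintro rfl
        exact ⟨List.nil_infix, rfl⟩
    rw [h]
    simp
  | append_singleton v a ih =>
    calc (Pals (v ++ [a])).ncard ≤ (Pals v).ncard + 1 := pals_step v a
      _ ≤ v.length + 1 + 1 := by omega
      _ = (v ++ [a]).length + 1 := by simp

lemma pals_ext_bound (v t : List α) :
    (Pals (v ++ t)).ncard ≤ (Pals v).ncard + t.length := by
  induction t using List.reverseRecOn with
  | nil => simp
  | append_singleton t' a ih =>
    have h1 : (Pals ((v ++ t') ++ [a])).ncard ≤ (Pals (v ++ t')).ncard + 1 := pals_step _ a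
    rw [← List.append_assoc]
    have h2 : (t' ++ [a]).length = t'.length + 1 := by simp
    omega

lemma not_rich (v t : List α) (a : α)
    (h : ∀ s, s <:+ v ++ [a] → Palindromic s → s <:+: v) :
    ¬ Rich ((v ++ [a]) ++ t) := by
  intro hr
  have h1 : Pals (v ++ [a]) ⊆ Pals v := by
    rintro p ⟨hinf, hpal⟩
    rcases infix_concat hinf with hp | hp
    · exact ⟨hp, hpal⟩
    · exact ⟨h p hp hpal, hpal⟩
  have h2 : (Pals ((v ++ [a]) ++ t)).ncard ≤ (Pals (v ++ [a])).ncard + t.length :=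
    pals_ext_bound _ _
  have h3 : (Pals (v ++ [a])).ncard ≤ (Pals v).ncard :=
    Set.ncard_le_ncard h1 (pals_finite v)
  have h4 : (Pals v).ncard ≤ v.length + 1 := pals_bound v
  have h5 : (Pals ((v ++ [a]) ++ t)).ncard = ((v ++ [a]) ++ t).length + 1 := hr
  simp only [List.length_append, List.length_singleton] at h5
  omega

lemma first_occ {l : List α} {b : α} (h : b ∈ l) :
    ∃ s t, l = s ++ [b] ++ t ∧ b ∉ s := by
  induction l with
  | nil => simp at h
  | cons a l ih =>
    by_cases hab : a = b
    · exact ⟨[], l, by simp [hab], by simp⟩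
    · have hb : b ∈ l := by
        rcases List.mem_cons.mp h with h' | h'
        · exact absurd h'.symm hab
        · exact h'
      obtain ⟨s, t, hst, hbs⟩ := ih hb
      refine ⟨a :: s, t, by simp [hst], ?_⟩
      intro hmem
      rcases List.mem_cons.mp hmem with h' | h'
      · exact hab h'.symm
      · exact hbs h'

end MLUaux

theorem middle_letter_unioccurrent {α : Type*} (w z : List α) (b : α)
    (hrich : Rich w) (hsf : SqFree w) (hw : w = z ++ [b] ++ z.reverse) :
    b ∉ z := by
  intro hb
  -- decompose z at the last occurrence of b
  obtain ⟨s0, t0, hst, hbs⟩ := MLUaux.first_occ (l := z.reverse) (b := b) (by simpa using hb)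
  have hz : z = t0.reverse ++ [b] ++ s0.reverse := by
    have := congrArg List.reverse hst
    simpa [List.reverse_append, List.append_assoc] using this
  set x := t0.reverse with hx
  set y := s0.reverse with hy
  have hyb : b ∉ y := by simpa [hy] using hbs
  subst hw
  refine MLUaux.not_rich z z.reverse b ?_ hrich
  intro s hs hpal
  -- s is a palindromic suffix of z ++ [b]
  rcases List.eq_nil_or_concat' s with rfl | ⟨s', c, rfl⟩
  · exact List.nil_infix
  obtain ⟨q, hq⟩ := hs
  have h2 : (q ++ s') ++ [c] = z ++ [b] := by simpa [List.append_assoc] using hq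
  obtain ⟨h3, h4⟩ := List.append_inj' h2 rfl
  have hcb : b = c := by simpa using h4.symm
  subst hcb
  have hs'z : s' <:+ z := ⟨q, h3⟩
  rcases List.eq_nil_or_concat' s' with rfl | hne
  · -- s = [b], which is a factor of z
    exact ⟨x, y, by rw [hz]; simp⟩
  have hs'ne : s' ≠ [] := by rcases hne with ⟨l, a, rfl⟩; simp
  clear hne
  by_cases hlen : s'.length ≤ y.length
  · -- s' is a nonempty suffix of y; the palindrome s starts with b, so b ∈ y: contradiction
    have hyz : y <:+ z := ⟨x ++ [b], by rw [hz]⟩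
    have hs'y : s' <:+ y := List.suffix_of_suffix_length_le hs'z hyz hlen
    obtain ⟨d, u, rfl⟩ := List.exists_cons_of_ne_nil hs'ne
    have hp0 : ((d :: u) ++ [b]).reverse = (d :: u) ++ [b] := hpal
    have hp1 : b :: (u.reverse ++ [d]) = d :: (u ++ [b]) := by
      simpa [List.reverse_append] using hp0
    have hdb : b = d := ((List.cons.injEq _ _ _ _).mp hp1).1
    subst hdb
    exact absurd (hs'y.subset List.mem_cons_self) hyb
  · -- s' = m ++ [b] ++ y for some suffix m of x
    push_neg at hlen
    have hbyz : [b] ++ y <:+ z := ⟨x, by rw [hz]; simp⟩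
    have hby : [b] ++ y <:+ s' :=
      List.suffix_of_suffix_length_le hbyz hs'z (by simp; omega)
    obtain ⟨m, hm⟩ := hby
    -- m is a suffix of x
    obtain ⟨q', hq'⟩ := hs'z
    have hxq : x = q' ++ m := by
      rw [← hm, hz] at hq'
      have h6 : (q' ++ m) ++ ([b] ++ y) = x ++ ([b] ++ y) := by
        simpa [List.append_assoc] using hq'
      exact (List.append_inj' h6 rfl).1.symm
    -- the palindrome equation
    have hp0 : ((m ++ ([b] ++ y)) ++ [b]).reverse = (m ++ ([b] ++ y)) ++ [b] := by
      rw [hm]; exact hpal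
    have hE : [b] ++ (y.reverse ++ ([b] ++ m.reverse)) = m ++ ([b] ++ (y ++ [b])) := by
      simpa [List.reverse_append, List.append_assoc] using hp0
    exfalso
    rcases List.eq_nil_or_concat' m with rfl | hmne
    · -- s = b y b palindrome ⇒ y palindrome ⇒ square (by)(by)
      simp only [List.nil_append, List.reverse_nil, List.append_nil] at hE
      have hyy : y.reverse = y := by simpa using hE
      refine hsf ([b] ++ y) (by simp) ⟨x, [b] ++ x.reverse, ?_⟩
      rw [hz]
      simp [List.reverse_append, List.append_assoc, hyy]
    have hmne' : m ≠ [] := by rcases hmne with ⟨l, a, rfl⟩; simp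
    clear hmne
    have hpre1 : m <+: m ++ ([b] ++ (y ++ [b])) := ⟨[b] ++ (y ++ [b]), rfl⟩
    have hpre2 : [b] ++ (y.reverse ++ [b]) <+: m ++ ([b] ++ (y ++ [b])) := by
      rw [← hE]
      exact ⟨m.reverse, by simp [List.append_assoc]⟩
    rcases lt_trichotomy m.length (y.length + 1) with hc | hc | hc
    · -- m ++ [b] is a prefix of [b] ++ y.reverse, giving b ∈ y
      have hpre1' : m ++ [b] <+: m ++ ([b] ++ (y ++ [b])) :=
        ⟨y ++ [b], by simp [List.append_assoc]⟩
      have hpre2' : [b] ++ y.reverse <+: m ++ ([b] ++ (y ++ [b])) := by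
        rw [← hE]
        exact ⟨[b] ++ m.reverse, by simp [List.append_assoc]⟩
      have h9 : m ++ [b] <+: [b] ++ y.reverse :=
        List.prefix_of_prefix_length_le hpre1' hpre2' (by simp; omega)
      obtain ⟨d, u, rfl⟩ := List.exists_cons_of_ne_nil hmne'
      obtain ⟨r, hr⟩ := h9
      have h10 : d :: (u ++ ([b] ++ r)) = b :: y.reverse := by
        simpa [List.append_assoc] using hr
      have h11 := (List.cons.injEq _ _ _ _).mp h10
      have hby' : b ∈ y.reverse := by
        rw [← h11.2]
        simp
      exact hyb (by simpa using hby')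
    · -- m = [b] ++ y.reverse : square ([b] ++ y.reverse ++ [b] ++ y)²
      have hpre2'' : [b] ++ y.reverse <+: m ++ ([b] ++ (y ++ [b])) := by
        rw [← hE]
        exact ⟨[b] ++ m.reverse, by simp [List.append_assoc]⟩
      have hmeq : m = [b] ++ y.reverse := by
        have h9 : m <+: [b] ++ y.reverse :=
          List.prefix_of_prefix_length_le hpre1 hpre2'' (by simp; omega)
        exact h9.eq_of_length (by simp; omega)
      refine hsf ([b] ++ y.reverse ++ [b] ++ y) (by simp)
        ⟨q', [b] ++ q'.reverse, ?_⟩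
      rw [hz, hxq, hmeq]
      simp [List.reverse_append, List.append_assoc]
    · -- m = [b] ++ y.reverse ++ [b] ++ x₃ with x₃ a palindrome : square
      have h9 : [b] ++ (y.reverse ++ [b]) <+: m :=
        List.prefix_of_prefix_length_le hpre2 hpre1 (by simp; omega)
      obtain ⟨x₃, hx₃⟩ := h9
      have hrevm : m.reverse = x₃ ++ ([b] ++ (y ++ [b])) := by
        rw [← hx₃] at hE
        have h10 : ([b] ++ (y.reverse ++ [b])) ++ m.reverse
            = ([b] ++ (y.reverse ++ [b])) ++ (x₃ ++ ([b] ++ (y ++ [b]))) := by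
          rw [← hx₃]
          simpa [List.append_assoc] using hE
        exact List.append_cancel_left h10
      have hrevm2 : m.reverse = x₃.reverse ++ ([b] ++ (y ++ [b])) := by
        rw [← hx₃]
        simp [List.reverse_append, List.append_assoc]
      have hx₃pal : x₃.reverse = x₃ := by
        have h11 : x₃.reverse ++ ([b] ++ (y ++ [b])) = x₃ ++ ([b] ++ (y ++ [b])) := by
          rw [← hrevm2, hrevm]
        exact (List.append_inj' h11 rfl).1
      refine hsf ([b] ++ y.reverse ++ [b] ++ x₃ ++ [b] ++ y) (by simp)
        ⟨q', [b] ++ q'.reverse, ?_⟩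
      rw [hz, hxq, ← hx₃]
      simp [List.reverse_append, List.append_assoc, hx₃pal]
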